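/- Let p be a prime and H_p the Heisenberg group of order p^3 over ZMod p. If ρ₁ and ρ₂ are complex irreducible representations of H_p of dimension greater than 1 whose central characters agree (i.e., ρ₁(z) and ρ₂(z) are the same scalar for every central z), then ρ₁ and ρ₂ are isomorphic. -/

import Mathlib

open Matrix

/-- The matrix [[1,a,c],[0,1,b],[0,0,1]]. -/
def heisMat (p : ℕ) (a b c : ZMod p) : Matrix (Fin 3) (Fin 3) (ZMod p) :=
  !![1, a, c; 0, 1, b; 0, 0, 1]

/-- The Heisenberg group mod `p`, as a subgroup of `GL₃(ZMod p)`. -/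
def Heis (p : ℕ) : Subgroup (GL (Fin 3) (ZMod p)) where
  carrier := {g | ∃ a b c : ZMod p,
    (g : Matrix (Fin 3) (Fin 3) (ZMod p)) = heisMat p a b c}
  one_mem' := ⟨0, 0, 0, by simp [heisMat, Matrix.one_fin_three]⟩
  mul_mem' := by
    rintro x y ⟨a, b, c, hx⟩ ⟨a', b', c', hy⟩
    refine ⟨a + a', b + b', c + c' + a * b', ?_⟩
    rw [Units.val_mul, hx, hy]
    ext i j
    fin_cases i <;> fin_cases j <;>
      simp [heisMat, Matrix.mul_apply, Fin.sum_univ_three, Matrix.vecHead, Matrix.vecTail] <;> ring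
  inv_mem' := by
    rintro x ⟨a, b, c, hx⟩
    refine ⟨-a, -b, a * b - c, ?_⟩
    have h1 : (x : Matrix (Fin 3) (Fin 3) (ZMod p)) * heisMat p (-a) (-b) (a * b - c) = 1 := by
      rw [hx]
      ext i j
      fin_cases i <;> fin_cases j <;>
        simp [heisMat, Matrix.mul_apply, Fin.sum_univ_three, Matrix.one_apply, Matrix.vecHead, Matrix.vecTail] <;> ring
    calc ((x⁻¹ : GL (Fin 3) (ZMod p)) : Matrix (Fin 3) (Fin 3) (ZMod p))
        = ↑x⁻¹ * 1 := by rw [mul_one]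
      _ = ↑x⁻¹ * (↑x * heisMat p (-a) (-b) (a * b - c)) := by rw [h1]
      _ = (↑x⁻¹ * ↑x) * heisMat p (-a) (-b) (a * b - c) := by rw [mul_assoc]
      _ = heisMat p (-a) (-b) (a * b - c) := by rw [Units.inv_mul, one_mul]


open CategoryTheory

/-! ### Auxiliary material on the Heisenberg group -/

lemma heisMat_mul (p : ℕ) (a b c a' b' c' : ZMod p) :
    heisMat p a b c * heisMat p a' b' c' = heisMat p (a + a') (b + b') (c + c' + a * b') := by
  ext i j
  fin_cases i <;> fin_cases j <;>
    simp [heisMat, Matrix.mul_apply, Fin.sum_univ_three, Matrix.vecHead, Matrix.vecTail] <;> ring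

/-- The Heisenberg matrix as a unit. -/
noncomputable def heisUnit (p : ℕ) (a b c : ZMod p) : GL (Fin 3) (ZMod p) where
  val := heisMat p a b c
  inv := heisMat p (-a) (-b) (a * b - c)
  val_inv := by rw [heisMat_mul]; ext i j; fin_cases i <;> fin_cases j <;>
    simp [heisMat, Matrix.one_fin_three, Matrix.vecHead, Matrix.vecTail] <;> ring_nf
  inv_val := by rw [heisMat_mul]; ext i j; fin_cases i <;> fin_cases j <;>
    simp [heisMat, Matrix.one_fin_three, Matrix.vecHead, Matrix.vecTail] <;> ring_nf

/-- The element of the Heisenberg group with parameters `a b c`. -/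
noncomputable def heisEl (p : ℕ) (a b c : ZMod p) : ↥(Heis p) :=
  ⟨heisUnit p a b c, ⟨a, b, c, rfl⟩⟩

lemma heisEl_mul (p : ℕ) (a b c a' b' c' : ZMod p) :
    heisEl p a b c * heisEl p a' b' c' = heisEl p (a + a') (b + b') (c + c' + a * b') := by
  apply Subtype.ext; apply Units.ext
  exact heisMat_mul p a b c a' b' c'

lemma heisEl_surj {p : ℕ} (g : ↥(Heis p)) : ∃ a b c, g = heisEl p a b c := by
  obtain ⟨a, b, c, h⟩ := g.2
  exact ⟨a, b, c, Subtype.ext (Units.ext h)⟩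

lemma heisEl_one (p : ℕ) : (1 : ↥(Heis p)) = heisEl p 0 0 0 := by
  apply Subtype.ext; apply Units.ext
  show (1 : Matrix (Fin 3) (Fin 3) (ZMod p)) = heisMat p 0 0 0
  ext i j; fin_cases i <;> fin_cases j <;>
    simp [heisMat, Matrix.one_fin_three, Matrix.vecHead, Matrix.vecTail]

lemma heisEl_inv (p : ℕ) (a b c : ZMod p) :
    (heisEl p a b c)⁻¹ = heisEl p (-a) (-b) (a*b - c) := by
  rw [eq_comm, eq_inv_iff_mul_eq_one, heisEl_mul, heisEl_one]
  congr 1 <;> ring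

lemma heisEl_center (p : ℕ) (t : ZMod p) : heisEl p 0 0 t ∈ Subgroup.center ↥(Heis p) := by
  rw [Subgroup.mem_center_iff]
  intro g
  obtain ⟨a, b, c, rfl⟩ := heisEl_surj g
  rw [heisEl_mul, heisEl_mul]
  congr 1 <;> ring

lemma heisEl_pow (p : ℕ) (n : ℕ) : (heisEl p 0 0 1) ^ n = heisEl p 0 0 (n : ZMod p) := by
  induction n with
  | zero => rw [pow_zero, heisEl_one]; congr 1; simp
  | succ n ih =>
      rw [pow_succ, ih, heisEl_mul]
      congr 1 <;> push_cast <;> ring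

lemma heisEl_eq_pow (p : ℕ) [NeZero p] (t : ZMod p) :
    heisEl p 0 0 t = (heisEl p 0 0 1) ^ t.val := by
  rw [heisEl_pow]
  congr 1
  rw [ZMod.natCast_val, ZMod.cast_id]

lemma heis_conj {p : ℕ} [Fact p.Prime] (a b c : ZMod p) (hab : ¬(a = 0 ∧ b = 0)) :
    ∃ h : ↥(Heis p),
      h * heisEl p a b c * h⁻¹ = heisEl p a b c * heisEl p 0 0 1 := by
  have key : ∃ h : ↥(Heis p), h * heisEl p a b c = (heisEl p a b c * heisEl p 0 0 1) * h := by
    by_cases hb : b = 0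
    · have ha : a ≠ 0 := by tauto
      refine ⟨heisEl p 0 (-a⁻¹) 0, ?_⟩
      rw [heisEl_mul, heisEl_mul, heisEl_mul]
      congr 1 <;> [ring; ring; simp [ha]]
    · refine ⟨heisEl p b⁻¹ 0 0, ?_⟩
      rw [heisEl_mul, heisEl_mul, heisEl_mul]
      congr 1 <;> [ring; ring; simp [hb]]
  obtain ⟨h, hh⟩ := key
  exact ⟨h, by rw [hh, mul_assoc, mul_inv_cancel, mul_one]⟩

/-! ### Representation-theoretic helpers -/

lemma schur_scalar' {G : Type} [Group G] (X : FDRep ℂ G) [Simple X] (z : G)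
    (hcomm : ∀ g : G, X.ρ g ∘ₗ X.ρ z = X.ρ z ∘ₗ X.ρ g) :
    ∃ c : ℂ, X.ρ z = c • LinearMap.id := by
  let f : X ⟶ X := ⟨InducedCategory.homMk (ModuleCat.ofHom (X.ρ z)), fun g => by
    ext1; exact (hcomm g).symm⟩
  obtain ⟨c, hc⟩ := endomorphism_simple_eq_smul_id ℂ f
  refine ⟨c, ?_⟩
  have := congrArg (fun φ => φ.hom.hom.hom) hc
  exact this.symm

lemma schur_scalar {G : Type} [Group G] (X : FDRep ℂ G) [Simple X] {z : G}
    (hz : z ∈ Subgroup.center G) : ∃ c : ℂ, X.ρ z = c • LinearMap.id := by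
  refine schur_scalar' X z fun g => ?_
  have := congrArg X.ρ (Subgroup.mem_center_iff.mp hz g)
  rw [_root_.map_mul, _root_.map_mul] at this
  exact this

lemma orth_ne {G : Type} [Group G] [Fintype G] (X Y : FDRep ℂ G) [Simple X] [Simple Y]
    (h : ¬ Nonempty (X ≅ Y)) : ∑ g : G, X.character g * Y.character g⁻¹ = 0 := by
  have hcard : (Fintype.card G : ℂ) ≠ 0 := Nat.cast_ne_zero.mpr Fintype.card_ne_zero
  letI : Fintype G := ‹Fintype G›
  letI hinv : Invertible ((Nat.card G) : ℂ) := by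
    exact invertibleOfNonzero (by rw [Nat.card_eq_fintype_card]; exact hcard)
  have h2 := FDRep.char_orthonormal (k := ℂ) (G := G) X Y
  rw [if_neg h] at h2
  have h3 := congrArg (fun x => ((Nat.card G : ℂ)) • x) h2
  simp only [smul_eq_mul, ← mul_assoc, mul_inv_cancel₀ (a := (Nat.card G : ℂ)) (by rw [Nat.card_eq_fintype_card]; exact hcard), one_mul, mul_zero] at h3
  exact h3

lemma orth_self {G : Type} [Group G] [Fintype G] (X : FDRep ℂ G) [Simple X] :
    ∑ g : G, X.character g * X.character g⁻¹ = (Fintype.card G : ℂ) := by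
  have hcard : (Fintype.card G : ℂ) ≠ 0 := Nat.cast_ne_zero.mpr Fintype.card_ne_zero
  letI : Fintype G := ‹Fintype G›
  letI hinv : Invertible ((Nat.card G) : ℂ) := by
    exact invertibleOfNonzero (by rw [Nat.card_eq_fintype_card]; exact hcard)
  have h2 := FDRep.char_orthonormal (k := ℂ) (G := G) X X
  rw [if_pos ⟨Iso.refl X⟩] at h2
  have h3 := congrArg (fun x => ((Nat.card G : ℂ)) • x) h2
  simp only [smul_eq_mul, ← mul_assoc, mul_inv_cancel₀ (a := (Nat.card G : ℂ)) (by rw [Nat.card_eq_fintype_card]; exact hcard), one_mul] at h3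
  simpa [Nat.card_eq_fintype_card] using h3

lemma char_of_scalar {G : Type} [Group G] (X : FDRep ℂ G) (g : G) (c : ℂ)
    (h : X.ρ g = c • LinearMap.id) :
    X.character g = c * Module.finrank ℂ X := by
  rw [FDRep.character, h, _root_.map_smul, LinearMap.trace_id, smul_eq_mul]

lemma rho_mul_inv {G : Type} [Group G] (X : FDRep ℂ G) (g : G) :
    X.ρ g * X.ρ g⁻¹ = 1 := by
  rw [← _root_.map_mul, mul_inv_cancel, _root_.map_one]

lemma scalar_ne_zero {G : Type} [Group G] (X : FDRep ℂ G) (g : G) (c : ℂ)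
    (h : X.ρ g = c • LinearMap.id) (hd : Module.finrank ℂ X ≠ 0) : c ≠ 0 := by
  intro hc
  subst hc
  have h1 := rho_mul_inv X g
  rw [h, zero_smul, zero_mul] at h1
  have h2 := congrArg (LinearMap.trace ℂ X) h1
  rw [map_zero, LinearMap.trace_one] at h2
  exact hd (by exact_mod_cast h2.symm)

lemma rho_inv_scalar {G : Type} [Group G] (X : FDRep ℂ G) (g : G) (c : ℂ) (hc : c ≠ 0)
    (h : X.ρ g = c • LinearMap.id) : X.ρ g⁻¹ = c⁻¹ • LinearMap.id := by
  have h1 := rho_mul_inv X g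
  rw [h] at h1
  have h2 : (c • LinearMap.id : Module.End ℂ X) * X.ρ g⁻¹ = c • X.ρ g⁻¹ := by
    ext v; simp [Module.End.mul_apply]
  rw [h2] at h1
  have h3 := congrArg (fun f => c⁻¹ • f) h1
  simp only [smul_smul, inv_mul_cancel₀ hc, one_smul] at h3
  rw [h3]
  ext v; simp [Module.End.one_apply]

/-- The character of a rep of `H_p` whose central character at `z₀` is `ω ≠ 1` vanishes
off the center. -/
lemma char_vanish {p : ℕ} [Fact p.Prime] (X : FDRep ℂ ↥(Heis p)) (ω : ℂ)
    (hω : X.ρ (heisEl p 0 0 1) = ω • LinearMap.id) (hω1 : ω ≠ 1)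
    (a b c : ZMod p) (hab : ¬(a = 0 ∧ b = 0)) :
    X.character (heisEl p a b c) = 0 := by
  obtain ⟨h, hh⟩ := heis_conj a b c hab
  have e1 : X.character (heisEl p a b c * heisEl p 0 0 1) = X.character (heisEl p a b c) := by
    rw [← hh, FDRep.char_conj]
  have e2 : X.character (heisEl p a b c * heisEl p 0 0 1)
      = ω * X.character (heisEl p a b c) := by
    rw [FDRep.character, _root_.map_mul, hω]
    have : X.ρ (heisEl p a b c) * (ω • LinearMap.id) = ω • X.ρ (heisEl p a b c) := by
      ext v; simp [Module.End.mul_apply]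
    rw [this, _root_.map_smul, smul_eq_mul, FDRep.character]
  have : (ω - 1) * X.character (heisEl p a b c) = 0 := by
    rw [sub_mul, one_mul, ← e2, e1, sub_self]
  rcases mul_eq_zero.mp this with h0 | h0
  · exact absurd (by linear_combination h0) hω1
  · exact h0

/-- The central character of a `>1`-dimensional irreducible is nontrivial at `z₀`. -/
lemma omega_ne_one {p : ℕ} [Fact p.Prime] [Fintype ↥(Heis p)] (X : FDRep ℂ ↥(Heis p)) [Simple X]
    (hd : 1 < Module.finrank ℂ X) (ω : ℂ)
    (hω : X.ρ (heisEl p 0 0 1) = ω • LinearMap.id) : ω ≠ 1 := by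
  intro h1
  subst h1
  rw [one_smul] at hω
  -- the center acts trivially
  have hcent : ∀ t : ZMod p, X.ρ (heisEl p 0 0 t) = LinearMap.id := by
    intro t
    rw [heisEl_eq_pow, _root_.map_pow, hω]
    ext v
    simp
  -- hence all operators commute
  have hcomm : ∀ g h : ↥(Heis p), X.ρ g ∘ₗ X.ρ h = X.ρ h ∘ₗ X.ρ g := by
    intro g h
    obtain ⟨a, b, c, rfl⟩ := heisEl_surj g
    obtain ⟨a', b', c', rfl⟩ := heisEl_surj h
    have key : heisEl p a b c * heisEl p a' b' c'
        = (heisEl p a' b' c' * heisEl p a b c) * heisEl p 0 0 (a * b' - a' * b) := by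
      rw [heisEl_mul, heisEl_mul, heisEl_mul]
      congr 1 <;> ring
    have := congrArg X.ρ key
    rw [_root_.map_mul, _root_.map_mul, _root_.map_mul, hcent] at this
    simpa [Module.End.mul_eq_comp] using this
  -- so every operator is a scalar
  have hscal : ∀ g : ↥(Heis p), ∃ c : ℂ, X.ρ g = c • LinearMap.id := by
    intro g
    exact schur_scalar' X g fun h => hcomm h g
  -- therefore every character value times its inverse's is `d²`
  have hd0 : (Module.finrank ℂ X : ℂ) ≠ 0 := Nat.cast_ne_zero.mpr (by omega)
  have hchar : ∀ g : ↥(Heis p), X.character g * X.character g⁻¹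
      = (Module.finrank ℂ X : ℂ) ^ 2 := by
    intro g
    obtain ⟨cg, hcg⟩ := hscal g
    have hc0 : cg ≠ 0 := scalar_ne_zero X g cg hcg (by omega)
    rw [char_of_scalar X g cg hcg, char_of_scalar X g⁻¹ cg⁻¹ (rho_inv_scalar X g cg hc0 hcg)]
    field_simp
  have horth := orth_self X
  rw [Finset.sum_congr rfl (fun g _ => hchar g), Finset.sum_const, Finset.card_univ,
    nsmul_eq_mul] at horth
  have hcard : (Fintype.card ↥(Heis p) : ℂ) ≠ 0 := Nat.cast_ne_zero.mpr Fintype.card_ne_zero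
  have hsq : (Module.finrank ℂ X : ℂ) ^ 2 = 1 :=
    mul_left_cancel₀ hcard (by rw [horth, mul_one])
  have hsq' : ((Module.finrank ℂ X ^ 2 : ℕ) : ℂ) = ((1 : ℕ) : ℂ) := by push_cast; simpa using hsq
  have h2 : Module.finrank ℂ X ^ 2 = 1 := Nat.cast_injective hsq'
  nlinarith [h2, hd]

/-- Two complex irreducible representations of the Heisenberg group `H_p` of dimension `> 1`
with the same central character are isomorphic. -/
theorem heis_irrep_determined_by_central_character (p : ℕ) [Fact p.Prime]
    (ρ₁ ρ₂ : FDRep ℂ ↥(Heis p)) (h₁ : Simple ρ₁) (h₂ : Simple ρ₂)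
    (hd₁ : 1 < Module.finrank ℂ ρ₁) (hd₂ : 1 < Module.finrank ℂ ρ₂)
    (hcc : ∀ z ∈ Subgroup.center ↥(Heis p), ∀ c : ℂ,
      ρ₁.ρ z = c • LinearMap.id → ρ₂.ρ z = c • LinearMap.id) :
    Nonempty (ρ₁ ≅ ρ₂) := by
  classical
  haveI := h₁; haveI := h₂
  letI : Fintype ↥(Heis p) := Fintype.ofFinite _
  by_contra hiso
  have hsum := orth_ne ρ₁ ρ₂ hiso
  obtain ⟨ω, hω⟩ := schur_scalar ρ₁ (heisEl_center p 1)
  have hω1 : ω ≠ 1 := omega_ne_one ρ₁ hd₁ ω hω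
  set d₁ := Module.finrank ℂ ρ₁ with hd₁def
  set d₂ := Module.finrank ℂ ρ₂ with hd₂def
  have key : ∀ g : ↥(Heis p), ρ₁.character g * ρ₂.character g⁻¹
      = if ∃ t : ZMod p, g = heisEl p 0 0 t then (d₁ : ℂ) * (d₂ : ℂ) else 0 := by
    intro g
    by_cases hg : ∃ t : ZMod p, g = heisEl p 0 0 t
    · rw [if_pos hg]
      obtain ⟨t, rfl⟩ := hg
      obtain ⟨c, hc⟩ := schur_scalar ρ₁ (heisEl_center p t)
      have hc0 : c ≠ 0 := scalar_ne_zero ρ₁ _ c hc (by omega)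
      have hc2 : ρ₂.ρ (heisEl p 0 0 t) = c • LinearMap.id :=
        hcc _ (heisEl_center p t) c hc
      rw [char_of_scalar ρ₁ _ c hc,
        char_of_scalar ρ₂ _ c⁻¹ (rho_inv_scalar ρ₂ _ c hc0 hc2)]
      field_simp
      ring
    · rw [if_neg hg]
      obtain ⟨a, b, c, rfl⟩ := heisEl_surj g
      have hab : ¬(a = 0 ∧ b = 0) := by
        rintro ⟨rfl, rfl⟩
        exact hg ⟨c, rfl⟩
      rw [char_vanish ρ₁ ω hω hω1 a b c hab, zero_mul]
  rw [Finset.sum_congr rfl (fun g _ => key g)] at hsum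
  rw [← Finset.sum_filter] at hsum
  rw [Finset.sum_const, nsmul_eq_mul] at hsum
  have hmem : (1 : ↥(Heis p)) ∈ Finset.univ.filter
      (fun g : ↥(Heis p) => ∃ t : ZMod p, g = heisEl p 0 0 t) := by
    simp only [Finset.mem_filter, Finset.mem_univ, true_and]
    exact ⟨0, heisEl_one p⟩
  have hcard0 : ((Finset.univ.filter
      (fun g : ↥(Heis p) => ∃ t : ZMod p, g = heisEl p 0 0 t)).card : ℂ) ≠ 0 := by
    refine Nat.cast_ne_zero.mpr ?_
    exact Finset.card_ne_zero_of_mem hmem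
  have hK : ((d₁ : ℂ) * (d₂ : ℂ)) ≠ 0 :=
    mul_ne_zero (Nat.cast_ne_zero.mpr (by omega)) (Nat.cast_ne_zero.mpr (by omega))
  exact (mul_ne_zero hcard0 hK) hsum
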